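/- With notation as in the setup (Λ̃ = Λ₀ ⊕ U even unimodular ⊕ hyperbolic plane, v = u₁ + m̃u₂, Λ = v^⊥, κ ∈ Λ primitive with κ² = 2l, κ_* = kδ_*, 0 ≤ k ≤ m̃, d = gcd(2m̃, k)), and a ≥ 0 an integer: there exists a nonzero s ∈ Λ̃ in the saturation of the sublattice spanned by κ and v with s² ≥ −2a and |(s,v)| ≤ m̃, if and only if the unique integer c with l = c(2m̃/d)² − m̃(k/d)² satisfies c ≥ −a. Moreover when c ≥ −a one may take s with s² = 2c and (s,v) = −k. -/

import Mathlib

private lemma aux_sq_one {α : ℤ} (h : α ≠ 0) : 1 ≤ α ^ 2 := by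
  rcases lt_or_gt_of_ne h with h' | h' <;> nlinarith

private lemma aux_s1zero {mt s1 : ℤ} (hmt : 1 ≤ mt) (hl : -mt ≤ 2 * mt * s1)
    (hu : 2 * mt * s1 ≤ mt) : s1 = 0 := by
  rcases lt_trichotomy s1 0 with h' | h' | h'
  · nlinarith
  · exact h'
  · nlinarith

private lemma aux_he2 {mt k α μ e : ℤ} (hmt : 1 ≤ mt)
    (hemu : e = -(k * α) + 2 * mt * μ) (hl : -mt ≤ e) (hu : e ≤ mt) :
    e ^ 2 ≤ k ^ 2 * α ^ 2 := by
  rcases le_or_gt (mt ^ 2) (k ^ 2 * α ^ 2) with h' | h'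
  · nlinarith
  · have hkα1 : k * α ≤ mt - 1 := by nlinarith
    have hkα2 : -(mt - 1) ≤ k * α := by nlinarith
    have hμ0 : μ = 0 := by
      rcases lt_trichotomy μ 0 with h'' | h'' | h''
      · nlinarith
      · exact h''
      · nlinarith
    rw [hemu, hμ0, mul_zero, add_zero]
    nlinarith

private lemma aux_final {mt c k α e ss A : ℤ} (hmt : 1 ≤ mt) (hα2 : 1 ≤ α ^ 2)
    (he2 : e ^ 2 ≤ k ^ 2 * α ^ 2)
    (hkey : 2 * mt * ss = (4 * mt * c - k ^ 2) * α ^ 2 + e ^ 2)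
    (hsa : -(2 * A) ≤ ss) (hA : 0 ≤ A) (hc : c ≤ -A - 1) : False := by
  have h1 : 2 * mt * ss ≤ 4 * mt * c * α ^ 2 := by nlinarith
  have h2 : 4 * mt * c * α ^ 2 ≤ 4 * mt * c := by
    nlinarith [mul_nonneg (mul_nonneg (show (0:ℤ) ≤ 4 * mt by linarith)
      (show (0:ℤ) ≤ -c by linarith)) (show (0:ℤ) ≤ α ^ 2 - 1 by linarith)]
  have h3 : -(4 * mt * A) ≤ 2 * mt * ss := by
    nlinarith [mul_nonneg (show (0:ℤ) ≤ 2 * mt by linarith) (show (0:ℤ) ≤ ss + 2 * A by linarith)]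
  have h4 : 4 * mt * c ≤ -(4 * mt * A) - 4 * mt := by
    nlinarith [mul_nonneg (show (0:ℤ) ≤ 4 * mt by linarith) (show (0:ℤ) ≤ -A - 1 - c by linarith)]
  linarith

/-- Proposition 4.4(ii): with the setup of `Λ̃ = Λ₀ ⊕ U`, `v = u₁ + m̃u₂`, `Λ = v^⊥`,
`κ ∈ Λ` primitive with `κ² = 2l`, `κ_* = kδ_*`, `0 ≤ k ≤ m̃`, `d = gcd(2m̃, k)`,
and `a ≥ 0`: there is a nonzero `s ∈ Λ̃` in the saturation of `⟨κ, v⟩` with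
`s² ≥ −2a` and `|(s,v)| ≤ m̃` iff the unique `c` with `l = c(2m̃/d)² − m̃(k/d)²`
satisfies `c ≥ −a`; and in that case one may take `s` with `s² = 2c`, `(s,v) = −k`.
Here `mt` plays the role of `m̃`, and membership in the saturation is expressed by
`N • s = x • κ + y • v` for some nonzero integer `N`. -/
theorem stmt_9 (Λ₀ : Type) [AddCommGroup Λ₀] [Module ℤ Λ₀]
    [Module.Free ℤ Λ₀] [Module.Finite ℤ Λ₀]
    (B : Λ₀ →ₗ[ℤ] Λ₀ →ₗ[ℤ] ℤ)
    (hsymm : ∀ x y, B x y = B y x)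
    (heven : ∀ x, 2 ∣ B x x)
    (hunimod : Function.Bijective fun x => B x)
    (mt : ℕ) (hmt : 1 ≤ mt)
    (Btil : Λ₀ × ℤ × ℤ → Λ₀ × ℤ × ℤ → ℤ)
    (hBtil : ∀ w z, Btil w z = B w.1 z.1 + w.2.1 * z.2.2 + w.2.2 * z.2.1)
    (v δ : Λ₀ × ℤ × ℤ)
    (hv : v = (0, 1, (mt : ℤ))) (hδ : δ = (0, 1, -(mt : ℤ)))
    (κ : Λ₀ × ℤ × ℤ)
    (hκΛ : Btil κ v = 0)
    (hprim : ∀ (c : ℤ) (w : Λ₀ × ℤ × ℤ), κ = c • w → IsUnit c)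
    (γ : ℕ) (hγpos : 0 < γ)
    (hdiv : ∀ t : ℤ, ((γ : ℤ) ∣ t ↔ ∃ w, Btil w v = 0 ∧ Btil κ w = t))
    (l : ℤ) (hsq : Btil κ κ = 2 * l)
    (k : ℤ) (hk0 : 0 ≤ k) (hk : k ≤ (mt : ℤ))
    (hstar : ∃ w, Btil w v = 0 ∧
      (2 * (mt : ℤ)) • κ - (k * (γ : ℤ)) • δ = ((2 * (mt : ℤ)) * (γ : ℤ)) • w)
    (d : ℕ) (hd : d = Int.gcd (2 * (mt : ℤ)) k)
    (c : ℤ) (hc : l = c * ((2 * (mt : ℤ)) / (d : ℤ)) ^ 2 - (mt : ℤ) * (k / (d : ℤ)) ^ 2)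
    (a : ℕ) :
    ((∃ s : Λ₀ × ℤ × ℤ, s ≠ 0 ∧
        (∃ N x y : ℤ, N ≠ 0 ∧ N • s = x • κ + y • v) ∧
        -(2 * (a : ℤ)) ≤ Btil s s ∧ |Btil s v| ≤ (mt : ℤ)) ↔ -(a : ℤ) ≤ c) ∧
    (-(a : ℤ) ≤ c → ∃ s : Λ₀ × ℤ × ℤ, s ≠ 0 ∧
        (∃ N x y : ℤ, N ≠ 0 ∧ N • s = x • κ + y • v) ∧
        Btil s s = 2 * c ∧ Btil s v = -k) := by
  -- basic numeric facts
  have hmt' : (1:ℤ) ≤ (mt:ℤ) := by exact_mod_cast hmt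
  have hM0 : (2 * (mt:ℤ)) ≠ 0 := by positivity
  set G : ℤ := (γ : ℤ) with hGdef
  have hGpos : 0 < G := by rw [hGdef]; exact_mod_cast hγpos
  have hG0 : G ≠ 0 := ne_of_gt hGpos
  set D : ℤ := (d : ℤ) with hDdef
  have hd0 : d ≠ 0 := by
    intro h
    rw [h] at hd
    have h1 := (Int.gcd_eq_zero_iff.mp hd.symm).1
    simp at h1
    omega
  have hDpos : 0 < D := by rw [hDdef]; exact_mod_cast Nat.pos_of_ne_zero hd0
  have hD0 : D ≠ 0 := ne_of_gt hDpos
  have hDdvd2 : D ∣ 2 * (mt:ℤ) := by rw [hDdef, hd]; exact Int.gcd_dvd_left _ _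
  have hDdvdk : D ∣ k := by rw [hDdef, hd]; exact Int.gcd_dvd_right _ _
  obtain ⟨K, hK⟩ := hDdvdk
  obtain ⟨T, hT⟩ := hDdvd2
  -- cancellation helpers
  haveI hfree : Module.IsTorsionFree ℤ Λ₀ := inferInstance
  have hcan : ∀ (n : ℤ) (x y : Λ₀), n ≠ 0 → n • x = n • y → x = y := by
    intro n x y hn h
    rw [← Int.cast_smul_eq_zsmul ℤ, ← Int.cast_smul_eq_zsmul ℤ] at h
    have hinj := smul_right_injective Λ₀ (r := (n:ℤ)) (by exact_mod_cast hn)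
    exact hinj h
  have hcanP : ∀ (n : ℤ) (X Y : Λ₀ × ℤ × ℤ), n ≠ 0 → n • X = n • Y → X = Y := by
    intro n X Y hn h
    have h1 : n • X.1 = n • Y.1 := by have := congrArg Prod.fst h; simpa using this
    have h2 : n * X.2.1 = n * Y.2.1 := by
      have := congrArg (fun z => z.2.1) h; simpa using this
    have h3 : n * X.2.2 = n * Y.2.2 := by
      have := congrArg (fun z => z.2.2) h; simpa using this
    have e1 := hcan n _ _ hn h1
    have e2 := mul_left_cancel₀ hn h2
    have e3 := mul_left_cancel₀ hn h3
    ext <;> assumption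
  -- bilinearity of B with respect to zsmul
  have hBz : ∀ (n : ℤ) (x y : Λ₀), B (n • x) y = n * B x y := by
    intro n x y
    induction n using Int.induction_on with
    | zero => rw [zero_zsmul]; simp
    | succ i ih => rw [add_zsmul, one_zsmul, map_add]; simp only [LinearMap.add_apply, ih]; push_cast; ring
    | pred i ih =>
      rw [sub_zsmul, one_zsmul, map_add]
      simp only [LinearMap.add_apply, ih, map_neg, LinearMap.neg_apply]
      push_cast; ring
  have hBz2 : ∀ (n : ℤ) (x y : Λ₀), B x (n • y) = n * B x y := by
    intro n x y
    rw [hsymm, hBz, hsymm]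
  subst hv hδ
  obtain ⟨w', hw'v, hw'eq⟩ := hstar
  obtain ⟨w0, w1, w2⟩ := w'
  obtain ⟨κ0, p, q⟩ := κ
  -- component facts
  have hq : q = -(p * (mt:ℤ)) := by
    rw [hBtil] at hκΛ
    simp at hκΛ
    linarith
  have hw2 : w2 = -(w1 * (mt:ℤ)) := by
    rw [hBtil] at hw'v
    simp at hw'v
    linarith
  have hA : (2 * (mt:ℤ)) • κ0 = ((2 * (mt:ℤ)) * G) • w0 := by
    have := congrArg Prod.fst hw'eq
    simp at this
    rw [zsmul_zero, sub_zero] at this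
    exact this
  have hB2 : 2 * (mt:ℤ) * p - k * G = 2 * (mt:ℤ) * G * w1 := by
    have := congrArg (fun z => z.2.1) hw'eq
    simp at this
    linarith
  have hκ0 : κ0 = G • w0 := by
    apply hcan (2 * (mt:ℤ)) _ _ hM0
    rw [hA, mul_zsmul]
  -- step 1 : 2mt ∣ D * G
  have hdvd1 : (2 * (mt:ℤ)) ∣ k * G := ⟨p - G * w1, by linear_combination -hB2⟩
  obtain ⟨P, hP⟩ := hdvd1
  have hbez := Int.gcd_eq_gcd_ab (2 * (mt:ℤ)) k
  have hDbez : D = 2 * (mt:ℤ) * Int.gcdA (2 * (mt:ℤ)) k + k * Int.gcdB (2 * (mt:ℤ)) k := by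
    rw [hDdef, hd]; exact_mod_cast hbez
  have hdvd2 : (2 * (mt:ℤ)) ∣ D * G :=
    ⟨Int.gcdA (2 * (mt:ℤ)) k * G + P * Int.gcdB (2 * (mt:ℤ)) k, by
      linear_combination G * hDbez + Int.gcdB (2 * (mt:ℤ)) k * hP⟩
  -- step 2 : T • κ = G • z  and then G ∣ T
  have hTp : T * p = G * (K + T * w1) := by
    apply mul_left_cancel₀ hD0
    linear_combination hB2 + G * hK + (G * w1 - p) * hT
  have hTq : T * q = G * (K * (-(mt:ℤ)) + T * w2) := by
    rw [hq, hw2]; linear_combination (-(mt:ℤ)) * hTp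
  set z : Λ₀ × ℤ × ℤ := ((T • w0 : Λ₀), K + T * w1, K * (-(mt:ℤ)) + T * w2) with hzdef
  have hTκ : T • ((κ0, p, q) : Λ₀ × ℤ × ℤ) = G • z := by
    rw [Prod.ext_iff, Prod.ext_iff]
    refine ⟨?_, ?_, ?_⟩
    · show T • κ0 = (G • z).1
      rw [hκ0]
      have : (G • z).1 = G • (T • w0) := by simp [hzdef]
      rw [this, ← mul_zsmul, mul_comm, mul_zsmul]
    · show (T • ((κ0, p, q) : Λ₀ × ℤ × ℤ)).2.1 = (G • z).2.1
      simp [hzdef]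
      linarith [hTp]
    · show (T • ((κ0, p, q) : Λ₀ × ℤ × ℤ)).2.2 = (G • z).2.2
      simp [hzdef]
      linarith [hTq]
  have hg0 : ((Int.gcd T G : ℤ)) ≠ 0 := by
    intro h
    have h2 : Int.gcd T G = 0 := by exact_mod_cast h
    exact hG0 (Int.gcd_eq_zero_iff.mp h2).2
  obtain ⟨G₂, hG₂⟩ : ((Int.gcd T G : ℤ)) ∣ G := Int.gcd_dvd_right _ _
  have hbez2 := Int.gcd_eq_gcd_ab T G
  set A2 : ℤ := Int.gcdA T G with hA2def
  set B2 : ℤ := Int.gcdB T G with hB2def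
  have hκsplit : ((κ0, p, q) : Λ₀ × ℤ × ℤ)
      = G₂ • (A2 • z + B2 • ((κ0, p, q) : Λ₀ × ℤ × ℤ)) := by
    apply hcanP ((Int.gcd T G : ℤ)) _ _ hg0
    conv_lhs => rw [hbez2]
    rw [add_zsmul, mul_comm T A2, mul_zsmul, hTκ, ← mul_zsmul, mul_comm A2 G, mul_zsmul]
    rw [← mul_zsmul _ ((Int.gcd T G : ℤ)) G₂, ← hG₂, zsmul_add, ← mul_zsmul z G A2,
      ← mul_zsmul _ G B2]
  have hunit : IsUnit G₂ := hprim G₂ _ hκsplit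
  have hGdvdT : G ∣ T := by
    rcases Int.isUnit_iff.mp hunit with h | h
    · rw [h, mul_one] at hG₂
      rw [hG₂]
      exact Int.gcd_dvd_left _ _
    · rw [h, mul_neg_one] at hG₂
      have h2 : ((Int.gcd T G : ℤ)) ∣ T := Int.gcd_dvd_left _ _
      have h3 : ((Int.gcd T G : ℤ)) = -G := by linarith
      rw [h3] at h2
      exact (Int.neg_dvd).mp h2
  have hDG : D * G = 2 * (mt:ℤ) := by
    apply Int.dvd_antisymm (by positivity) (by positivity)
    · exact hT ▸ mul_dvd_mul_left D hGdvdT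
    · exact hdvd2
  have hp : p = K + G * w1 := by
    apply mul_left_cancel₀ hM0
    linear_combination hB2 + G * hK + K * hDG
  have hclG : l = c * G ^ 2 - (mt:ℤ) * K ^ 2 := by
    have hdivT : (2 * (mt:ℤ)) / D = G := by
      rw [← hDG]; exact Int.mul_ediv_cancel_left G hD0
    have hdivK : k / D = K := by
      rw [hK]; exact Int.mul_ediv_cancel_left K hD0
    rw [← hdivT, ← hdivK]; exact hc
  have hBκκ : B κ0 κ0 + p * q + q * p = 2 * l := by
    rw [hBtil] at hsq; simpa using hsq
  have hBw0 : G * (G * B w0 w0) + p * q + q * p = 2 * l := by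
    rw [hκ0, hBz, hBz2] at hBκκ; exact hBκκ
  -- the constructed element
  set s₀ : Λ₀ × ℤ × ℤ := (w0, w1, -(w1 * (mt:ℤ)) - k) with hs₀def
  have hs₀v : Btil s₀ ((0:Λ₀), 1, (mt:ℤ)) = -k := by
    rw [hBtil]; simp [hs₀def]; ring
  have hs₀s : Btil s₀ s₀ = 2 * c := by
    apply mul_left_cancel₀ (pow_ne_zero 2 hG0)
    rw [hBtil]
    simp only [hs₀def]
    linear_combination hBw0 - 2*p*hq + 2*hclG + 2*(mt:ℤ)*(p + K + G*w1)*hp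
      - 2*G^2*w1*hK - 2*G*w1*K*hDG
  have hmem : (2 * (mt:ℤ)) • s₀
      = D • ((κ0, p, q) : Λ₀ × ℤ × ℤ) + (-k) • (((0:Λ₀), 1, (mt:ℤ)) : Λ₀ × ℤ × ℤ) := by
    rw [Prod.ext_iff, Prod.ext_iff]
    refine ⟨?_, ?_, ?_⟩
    · show (2 * (mt:ℤ)) • w0
        = (D • ((κ0, p, q) : Λ₀ × ℤ × ℤ) + (-k) • (((0:Λ₀), 1, (mt:ℤ)) : Λ₀ × ℤ × ℤ)).1
      have : (D • ((κ0, p, q) : Λ₀ × ℤ × ℤ) + (-k) • (((0:Λ₀), 1, (mt:ℤ)) : Λ₀ × ℤ × ℤ)).1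
          = D • κ0 + (-k) • (0:Λ₀) := by simp
      rw [this, hκ0, ← mul_zsmul w0 D G, hDG, zsmul_zero, add_zero]
    · show ((2 * (mt:ℤ)) • s₀).2.1
        = (D • ((κ0, p, q) : Λ₀ × ℤ × ℤ) + (-k) • (((0:Λ₀), 1, (mt:ℤ)) : Λ₀ × ℤ × ℤ)).2.1
      simp [hs₀def]
      linear_combination -D*hp + hK - w1*hDG
    · show ((2 * (mt:ℤ)) • s₀).2.2
        = (D • ((κ0, p, q) : Λ₀ × ℤ × ℤ) + (-k) • (((0:Λ₀), 1, (mt:ℤ)) : Λ₀ × ℤ × ℤ)).2.2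
      simp [hs₀def]
      linear_combination -D*hq + D*(mt:ℤ)*hp - (mt:ℤ)*hK + w1*(mt:ℤ)*hDG
  have hs₀ne : s₀ ≠ 0 := by
    intro h
    obtain ⟨h01, h02, h03⟩ : w0 = 0 ∧ w1 = 0 ∧ -(w1 * (mt:ℤ)) - k = 0 := by
      simpa [hs₀def, Prod.ext_iff] using h
    rw [h02] at h03
    have hk0' : k = 0 := by linarith [h03, zero_mul ((mt:ℤ))]
    have hK0 : K = 0 := by
      have h4 : D * K = 0 := by rw [← hK, hk0']
      rcases mul_eq_zero.mp h4 with h' | h'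
      · exact absurd h' hD0
      · exact h'
    have hp0 : p = 0 := by rw [hp, hK0, h02]; ring
    have hq0 : q = 0 := by rw [hq, hp0]; ring
    have hκ00 : κ0 = 0 := by rw [hκ0, h01, zsmul_zero]
    have h5 : ((κ0, p, q) : Λ₀ × ℤ × ℤ) = (0:ℤ) • ((κ0, p, q) : Λ₀ × ℤ × ℤ) := by
      rw [zero_zsmul, Prod.ext_iff, Prod.ext_iff]
      exact ⟨by simpa using hκ00, by simpa using hp0, by simpa using hq0⟩
    have := hprim 0 _ h5
    simp at this
  have hexist : ∃ s : Λ₀ × ℤ × ℤ, s ≠ 0 ∧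
      (∃ N x y : ℤ, N ≠ 0 ∧ N • s = x • ((κ0, p, q) : Λ₀ × ℤ × ℤ)
        + y • (((0:Λ₀), 1, (mt:ℤ)) : Λ₀ × ℤ × ℤ)) ∧
      Btil s s = 2 * c ∧ Btil s ((0:Λ₀), 1, (mt:ℤ)) = -k :=
    ⟨s₀, hs₀ne, ⟨2 * (mt:ℤ), D, -k, hM0, hmem⟩, hs₀s, hs₀v⟩
  -- hBz analog as hypotheses for tuples: component equations of a saturation element
  have hrev : (∃ s : Λ₀ × ℤ × ℤ, s ≠ 0 ∧
      (∃ N x y : ℤ, N ≠ 0 ∧ N • s = x • ((κ0, p, q) : Λ₀ × ℤ × ℤ)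
        + y • (((0:Λ₀), 1, (mt:ℤ)) : Λ₀ × ℤ × ℤ)) ∧
      -(2 * (a : ℤ)) ≤ Btil s s ∧ |Btil s ((0:Λ₀), 1, (mt:ℤ))| ≤ (mt : ℤ)) → -(a:ℤ) ≤ c := by
    rintro ⟨⟨s0, s1, s2⟩, hs0, ⟨N, x, y, hN, hNs⟩, hsa, hsv⟩
    by_contra hcon
    push_neg at hcon
    have hc' : c ≤ -(a:ℤ) - 1 := by omega
    -- the element w realizing the divisibility γ ∣ γ
    obtain ⟨⟨g0, g1, g2⟩, hwgv, hwgκ⟩ := (hdiv G).mp dvd_rfl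
    have hg2 : g2 = -(g1 * (mt:ℤ)) := by
      rw [hBtil] at hwgv
      simp at hwgv
      linarith
    have hwgκ' : B κ0 g0 + p * g2 + q * g1 = G := by
      rw [hBtil] at hwgκ; simpa using hwgκ
    -- components of the saturation equation
    have hN1 : N • s0 = x • κ0 := by
      have := congrArg Prod.fst hNs
      simp at this
      rw [zsmul_zero, add_zero] at this
      exact this
    have hN2 : N * s1 = x * p + y := by
      have := congrArg (fun z : Λ₀ × ℤ × ℤ => z.2.1) hNs
      simpa using this
    have hN3 : N * s2 = x * q + y * (mt:ℤ) := by
      have := congrArg (fun z : Λ₀ × ℤ × ℤ => z.2.2) hNs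
      simp at this
      linarith
    set α : ℤ := B s0 g0 + s1 * g2 + s2 * g1 with hαdef
    set e : ℤ := s1 * (mt:ℤ) + s2 with hedef
    -- |e| ≤ mt
    have hsv' : |e| ≤ (mt:ℤ) := by
      have h6 : Btil ((s0, s1, s2) : Λ₀ × ℤ × ℤ) ((0:Λ₀), 1, (mt:ℤ)) = e := by
        rw [hBtil]; simp [hedef]
      rwa [h6] at hsv
    have hsvu := (abs_le.mp hsv').2
    have hsvl := (abs_le.mp hsv').1
    -- N * α = x * G
    have hBs0g0 : N * B s0 g0 = x * B κ0 g0 := by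
      have h7 : B (N • s0) g0 = B (x • κ0) g0 := by rw [hN1]
      rw [hBz, hBz] at h7
      exact h7
    have hNα : N * α = x * G := by
      rw [hαdef]
      linear_combination hBs0g0 + g2 * hN2 + g1 * hN3 + x * hwgκ' + y * hg2
    -- N * e = 2mt * y
    have hNe : N * e = 2 * (mt:ℤ) * y := by
      rw [hedef]
      linear_combination (mt:ℤ) * hN2 + hN3 + x * hq
    -- the congruence e ≡ -kα  mod 2mt
    have hcong : 2 * (mt:ℤ) * s1 = k * α + 2 * (mt:ℤ) * w1 * α + e := by
      apply mul_left_cancel₀ hN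
      linear_combination 2 * (mt:ℤ) * hN2 - (k + 2 * (mt:ℤ) * w1) * hNα - hNe + x * hB2
    -- energy identities
    have hBs0s0 : N * (N * B s0 s0) = x * (x * B κ0 κ0) := by
      have h8 : B (N • s0) (N • s0) = B (x • κ0) (x • κ0) := by rw [hN1]
      rw [hBz, hBz2, hBz, hBz2] at h8
      exact h8
    have hE : N ^ 2 * (B s0 s0 + s1 * s2 + s2 * s1) = 2 * l * x ^ 2 + 2 * (mt:ℤ) * y ^ 2 := by
      linear_combination hBs0s0 + x ^ 2 * hBκκ + 2 * N * s2 * hN2 + 2 * (x * p + y) * hN3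
        + 2 * x * y * hq
    have h4mtl : 4 * (mt:ℤ) * l = G ^ 2 * (4 * (mt:ℤ) * c - k ^ 2) := by
      linear_combination 4 * (mt:ℤ) * hclG + G ^ 2 * (k + D * K) * hK
        + K ^ 2 * (D * G + 2 * (mt:ℤ)) * hDG
    have hkey : 2 * (mt:ℤ) * (B s0 s0 + s1 * s2 + s2 * s1)
        = (4 * (mt:ℤ) * c - k ^ 2) * α ^ 2 + e ^ 2 := by
      apply mul_left_cancel₀ (pow_ne_zero 2 hN)
      linear_combination 2 * (mt:ℤ) * hE - (N * e + 2 * (mt:ℤ) * y) * hNe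
        - (4 * (mt:ℤ) * c - k ^ 2) * (N * α + x * G) * hNα + x ^ 2 * h4mtl
    -- α ≠ 0
    have hα0 : α ≠ 0 := by
      intro h0
      have hx0 : x = 0 := by
        have := hNα
        rw [h0, mul_zero] at this
        rcases mul_eq_zero.mp this.symm with h' | h'
        · exact h'
        · exact absurd h' hG0
      have he1 : e = 2 * (mt:ℤ) * s1 := by
        rw [h0] at hcong
        linarith
      have hs1 : s1 = 0 := by
        refine aux_s1zero hmt' ?_ ?_
        · rw [← he1]; exact hsvl
        · rw [← he1]; exact hsvu
      have he0 : e = 0 := by rw [he1, hs1, mul_zero]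
      have hy0 : y = 0 := by
        have h9 := hNe
        rw [he0, mul_zero] at h9
        rcases mul_eq_zero.mp h9.symm with h' | h'
        · exact absurd h' hM0
        · exact h'
      have hs2' : s2 = 0 := by
        have := hN3
        rw [hx0, hy0] at this
        simp at this
        rcases this with h' | h'
        · exact absurd h' hN
        · exact h'
      have hs1' : N • s0 = (0:ℤ) • κ0 := by rw [hx0] at hN1; exact hN1
      have hs0' : s0 = 0 := by
        apply hcan N _ _ hN
        rw [hs1', zero_zsmul, zsmul_zero]
      apply hs0
      rw [Prod.ext_iff, Prod.ext_iff]
      refine ⟨by simpa using hs0', by simpa using hs1, by simpa using hs2'⟩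
    have hα2 : 1 ≤ α ^ 2 := aux_sq_one hα0
    -- e² ≤ k²α²
    have he2 : e ^ 2 ≤ k ^ 2 * α ^ 2 := by
      have hemu : e = -(k * α) + 2 * (mt:ℤ) * (s1 - w1 * α) := by linarith [hcong]
      exact aux_he2 hmt' hemu hsvl hsvu
    -- extract the inequality on Btil s s
    have hsa' : -(2 * (a : ℤ)) ≤ B s0 s0 + s1 * s2 + s2 * s1 := by
      rw [hBtil] at hsa
      simpa using hsa
    -- final contradiction
    exact aux_final hmt' hα2 he2 hkey hsa' (Int.natCast_nonneg a) hc'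
  -- now assemble
  refine ⟨⟨hrev, fun hca => ?_⟩, fun hca => hexist⟩
  obtain ⟨s, hsne, hmm, hss, hsv⟩ := hexist
  refine ⟨s, hsne, hmm, ?_, ?_⟩
  · rw [hss]; linarith
  · rw [hsv, abs_neg, abs_of_nonneg hk0]; exact hk
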